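/- Let F ⊆ [0,1] be compact with lower dimension s > 0. Then for every ε > 0 there exists a compact subset F′ ⊆ F with lower dimension at least s − ε such that F′ is a Moran construction with strong separation condition and uniform branching number (i.e., F′ is built by iteratively replacing each construction interval with k equally long disjoint subintervals of length l_n, pairwise separated by at least l_n, for a fixed branching number k). -/

import Mathlib

open Set Metric Filter Pointwise

/-- Smallest number of balls of radius `r` needed to cover `E`. -/
noncomputable def coverNum {X : Type*} [PseudoMetricSpace X] (E : Set X) (r : ℝ) : ℕ :=
  sInf {n : ℕ | ∃ S : Finset X, S.card = n ∧ E ⊆ ⋃ x ∈ S, Metric.ball x r}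

/-- Upper box dimension of a bounded set. -/
noncomputable def upperBoxDimBdd {X : Type*} [PseudoMetricSpace X] (E : Set X) : ℝ :=
  Filter.limsup (fun r : ℝ => Real.log (coverNum E r : ℝ) / (-Real.log r))
    (nhdsWithin 0 (Set.Ioi 0))

/-- Lower box dimension of a bounded set. -/
noncomputable def lowerBoxDimBdd {X : Type*} [PseudoMetricSpace X] (E : Set X) : ℝ :=
  Filter.liminf (fun r : ℝ => Real.log (coverNum E r : ℝ) / (-Real.log r))
    (nhdsWithin 0 (Set.Ioi 0))

/-- Upper box dimension, extended to unbounded sets via suprema over bounded subsets. -/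
noncomputable def upperBoxDim {X : Type*} [PseudoMetricSpace X] (E : Set X) : ℝ :=
  ⨆ K : {K : Set X // K ⊆ E ∧ Bornology.IsBounded K}, upperBoxDimBdd K.1

/-- Lower box dimension, extended to unbounded sets via suprema over bounded subsets. -/
noncomputable def lowerBoxDim {X : Type*} [PseudoMetricSpace X] (E : Set X) : ℝ :=
  ⨆ K : {K : Set X // K ⊆ E ∧ Bornology.IsBounded K}, lowerBoxDimBdd K.1

/-- Assouad dimension. -/
noncomputable def assouadDim {X : Type*} [PseudoMetricSpace X] (F : Set X) : ℝ :=
  sInf {s : ℝ | 0 ≤ s ∧ ∃ C > 0, ∀ x ∈ F, ∀ R > 0, ∀ r, 0 < r → r < R →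
    (coverNum (Metric.ball x R ∩ F) r : ℝ) ≤ C * (R / r) ^ s}

/-- Lower dimension. -/
noncomputable def lowerDim {X : Type*} [PseudoMetricSpace X] (F : Set X) : ℝ :=
  sSup {s : ℝ | 0 ≤ s ∧ ∃ C > 0, ∀ x ∈ F, ∀ R, 0 < R → R < Metric.diam F →
    ∀ r, 0 < r → r < R →
      C * (R / r) ^ s ≤ (coverNum (Metric.ball x R ∩ F) r : ℝ)}

/-- `n`-fold iterated sumset: `iterSumset F n = F + F + ⋯ + F` (`n` times), with
`iterSumset F 0 = {0}`. -/
def iterSumset {M : Type*} [AddMonoid M] (F : Set M) : ℕ → Set M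
  | 0 => {0}
  | n + 1 => iterSumset F n + F

/-- Distance set of a set in a metric space. -/
def distSet {X : Type*} [PseudoMetricSpace X] (F : Set X) : Set ℝ :=
  {r : ℝ | ∃ x ∈ F, ∃ y ∈ F, dist x y = r}

/-- `F` is a Moran construction with strong separation condition and uniform branching
number: starting from `[0,1]`, each generation-`n` interval is replaced by `k` disjoint
subintervals of common length `l (n+1)`, with pairwise gaps at least `l (n+1)`
(equivalently, left endpoints at distance at least `2 · l (n+1)`), and `F` is the
intersection over all generations. -/
def IsMoran (F : Set ℝ) : Prop :=
  ∃ k : ℕ, 1 ≤ k ∧ ∃ (l : ℕ → ℝ) (a : List (Fin k) → ℝ),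
    l 0 = 1 ∧ a [] = 0 ∧ (∀ n, 0 < l (n + 1)) ∧
    (∀ (w : List (Fin k)) (c : Fin k),
      Set.Icc (a (w ++ [c])) (a (w ++ [c]) + l (w.length + 1)) ⊆
        Set.Icc (a w) (a w + l w.length)) ∧
    (∀ (w : List (Fin k)) (c c' : Fin k), c ≠ c' →
      2 * l (w.length + 1) ≤ |a (w ++ [c]) - a (w ++ [c'])|) ∧
    F = ⋂ n : ℕ, ⋃ w : {w : List (Fin k) // w.length = n},
          Set.Icc (a w.1) (a w.1 + l n)

noncomputable local instance (c r : ℝ) : DecidablePred (fun p : ℝ => p ∈ Metric.ball c r) :=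
  fun _ => Classical.dec _

lemma coverNum_le_card {E : Set ℝ} {r : ℝ} (S : Finset ℝ)
    (h : E ⊆ ⋃ x ∈ S, Metric.ball x r) : coverNum E r ≤ S.card :=
  Nat.sInf_le ⟨S, rfl, h⟩

lemma exists_cover {E : Set ℝ} (hE : E ⊆ Icc 0 1) {r : ℝ} (hr : 0 < r) :
    ∃ S : Finset ℝ, (E ⊆ ⋃ x ∈ S, Metric.ball x r) ∧ (S.card : ℝ) ≤ 1 / r + 1 := by
  refine ⟨(Finset.range (⌊1/r⌋₊ + 1)).image (fun j : ℕ => r * j), ?_, ?_⟩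
  · intro z hz
    obtain ⟨hz0, hz1⟩ := hE hz
    set j : ℕ := ⌊z/r⌋₊ with hj
    have hzr : (0:ℝ) ≤ z / r := div_nonneg hz0 hr.le
    have h1 : r * j ≤ z := by
      rw [mul_comm]
      exact (le_div_iff₀ hr).1 (Nat.floor_le hzr)
    have h2 : z < r * j + r := by
      have := Nat.lt_floor_add_one (z/r)
      have := (div_lt_iff₀ hr).1 this
      linarith [this]
    refine mem_iUnion₂.2 ⟨r * j, ?_, ?_⟩
    · refine Finset.mem_image.2 ⟨j, Finset.mem_range.2 (Nat.lt_succ_of_le ?_), rfl⟩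
      exact Nat.floor_mono (by gcongr)
    · rw [mem_ball, Real.dist_eq, abs_lt]
      constructor <;> linarith
  · calc ((Finset.image (fun j : ℕ => r * j) (Finset.range (⌊1/r⌋₊ + 1))).card : ℝ)
        ≤ ((Finset.range (⌊1/r⌋₊ + 1)).card : ℝ) := by
          exact_mod_cast Finset.card_image_le
    _ = (⌊1/r⌋₊ : ℝ) + 1 := by simp
    _ ≤ 1/r + 1 := by
          have := Nat.floor_le (le_of_lt (by positivity : (0:ℝ) < 1/r))
          linarith

lemma coverNum_realized {E : Set ℝ} (hE : E ⊆ Icc 0 1) {r : ℝ} (hr : 0 < r) :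
    ∃ S : Finset ℝ, S.card = coverNum E r ∧ E ⊆ ⋃ x ∈ S, Metric.ball x r := by
  obtain ⟨S, hS, -⟩ := exists_cover hE hr
  have hne : {n : ℕ | ∃ S : Finset ℝ, S.card = n ∧ E ⊆ ⋃ x ∈ S, Metric.ball x r}.Nonempty :=
    ⟨S.card, S, rfl, hS⟩
  exact Nat.sInf_mem hne

lemma coverNum_le_unit {E : Set ℝ} (hE : E ⊆ Icc 0 1) {r : ℝ} (hr : 0 < r) :
    (coverNum E r : ℝ) ≤ 1 / r + 1 := by
  obtain ⟨S, hS, hc⟩ := exists_cover hE hr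
  exact le_trans (by exact_mod_cast coverNum_le_card S hS) hc

lemma one_le_coverNum {E : Set ℝ} (hE : E ⊆ Icc 0 1) (hne : E.Nonempty) {r : ℝ} (hr : 0 < r) :
    1 ≤ coverNum E r := by
  obtain ⟨S, hS, hc⟩ := coverNum_realized hE hr
  rcases Nat.eq_zero_or_pos (coverNum E r) with h0 | h1
  · exfalso
    rw [h0, Finset.card_eq_zero] at hS
    obtain ⟨x, hx⟩ := hne
    have := hc hx
    simp [hS] at this
  · exact h1

/-- points of a `δ`-separated finite set lying in a ball of radius `r` number
at most `2r/δ + 1`. -/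
lemma card_filter_ball_le (P : Finset ℝ) {δ r c : ℝ} (hδ : 0 < δ) (hr : 0 < r)
    (hsep : ∀ p ∈ P, ∀ q ∈ P, p ≠ q → δ ≤ |p - q|) :
    ((P.filter (fun p => p ∈ Metric.ball c r)).card : ℝ) ≤ 2*r/δ + 1 := by
  classical
  set φ : ℝ → ℕ := fun p => ⌊(p - (c - r))/δ⌋₊ with hφ
  set Q := P.filter (fun p => p ∈ Metric.ball c r) with hQ
  have hmem : ∀ p ∈ Q, c - r < p ∧ p < c + r := by
    intro p hp
    rw [hQ, Finset.mem_filter] at hp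
    have := hp.2
    rw [mem_ball, Real.dist_eq, abs_lt] at this
    constructor <;> linarith [this.1, this.2]
  have hlt : ∀ p ∈ Q, ∀ q ∈ Q, δ ≤ q - p → φ p < φ q := by
    intro p hp q hq hpq
    have h0 : 0 ≤ (p - (c - r))/δ := div_nonneg (by linarith [(hmem p hp).1]) hδ.le
    have h1' : ((p - (c - r)) + δ)/δ ≤ (q - (c - r))/δ := by gcongr; linarith
    rw [add_div, div_self hδ.ne'] at h1'
    calc φ p < φ p + 1 := Nat.lt_succ_self _
    _ = ⌊(p - (c - r))/δ + 1⌋₊ := by rw [hφ]; simp [Nat.floor_add_one h0]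
    _ ≤ φ q := Nat.floor_mono h1'
  have hinj : Set.InjOn φ Q := by
    intro p hp q hq he
    by_contra hne
    have hd := hsep p (Finset.mem_filter.1 hp).1 q (Finset.mem_filter.1 hq).1 hne
    rcases lt_trichotomy p q with h | h | h
    · have : δ ≤ q - p := by rw [abs_sub_comm, abs_of_pos (by linarith)] at hd; linarith
      exact absurd he (hlt p hp q hq this).ne
    · exact hne h
    · have : δ ≤ p - q := by rw [abs_of_pos (by linarith)] at hd; linarith
      exact absurd he.symm (hlt q hq p hp this).ne
  have himg : Q.image φ ⊆ Finset.range (⌊2*r/δ⌋₊ + 1) := by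
    intro n hn
    obtain ⟨p, hp, rfl⟩ := Finset.mem_image.1 hn
    refine Finset.mem_range.2 (Nat.lt_succ_of_le (Nat.floor_mono ?_))
    have h2 := (hmem p hp).2
    gcongr
    linarith
  have hcard : Q.card ≤ ⌊2*r/δ⌋₊ + 1 := by
    rw [← Finset.card_image_of_injOn hinj]
    exact le_trans (Finset.card_le_card himg) (by simp)
  calc (Q.card : ℝ) ≤ (⌊2*r/δ⌋₊ : ℝ) + 1 := by exact_mod_cast hcard
  _ ≤ 2*r/δ + 1 := by
      have := Nat.floor_le (by positivity : (0:ℝ) ≤ 2*r/δ)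
      linarith

/-- If a finite set `P ⊆ E` is such that each `r`-ball contains at most `M` of its
points, then `card P ≤ coverNum E r * M`. -/
lemma card_le_coverNum_mul {E : Set ℝ} (hE : E ⊆ Icc 0 1) {r : ℝ} (hr : 0 < r)
    (P : Finset ℝ) (hPE : ↑P ⊆ E) (M : ℕ)
    (hM : ∀ c : ℝ, (P.filter (fun p => p ∈ Metric.ball c r)).card ≤ M) :
    P.card ≤ coverNum E r * M := by
  classical
  obtain ⟨S, hScard, hScov⟩ := coverNum_realized hE hr
  have hsub : P ⊆ S.biUnion (fun c => P.filter (fun p => p ∈ Metric.ball c r)) := by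
    intro p hp
    have := hScov (hPE hp)
    obtain ⟨c, hc, hpc⟩ := mem_iUnion₂.1 this
    exact Finset.mem_biUnion.2 ⟨c, hc, Finset.mem_filter.2 ⟨hp, hpc⟩⟩
  calc P.card ≤ (S.biUnion (fun c => P.filter (fun p => p ∈ Metric.ball c r))).card :=
        Finset.card_le_card hsub
  _ ≤ ∑ c ∈ S, (P.filter (fun p => p ∈ Metric.ball c r)).card := Finset.card_biUnion_le
  _ ≤ ∑ _c ∈ S, M := Finset.sum_le_sum (fun c _ => hM c)
  _ = S.card * M := by simp [Finset.sum_const, Nat.smul_one_eq_cast]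
  _ = coverNum E r * M := by rw [hScard]

/-- Existence of an `r`-separated subset of `E` which is at least as large as
`coverNum E r`. -/
lemma exists_sep_net {E : Set ℝ} (hE : E ⊆ Icc 0 1) {r : ℝ} (hr : 0 < r) :
    ∃ P : Finset ℝ, ↑P ⊆ E ∧ (∀ p ∈ P, ∀ q ∈ P, p ≠ q → r ≤ |p - q|) ∧
      coverNum E r ≤ P.card := by
  classical
  set A : Set ℕ := {n | ∃ P : Finset ℝ, ↑P ⊆ E ∧
    (∀ p ∈ P, ∀ q ∈ P, p ≠ q → r ≤ |p - q|) ∧ P.card = n} with hA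
  have hAne : A.Nonempty := ⟨0, ∅, by simp, by simp, rfl⟩
  have hbd : BddAbove A := by
    refine ⟨⌊2*1/r⌋₊ + 2, ?_⟩
    rintro n ⟨P, hPE, hsep, rfl⟩
    have h1 : P.filter (fun p => p ∈ Metric.ball (1/2 : ℝ) 1) = P := by
      apply Finset.filter_true_of_mem
      intro p hp
      obtain ⟨hp0, hp1⟩ := hE (hPE hp)
      rw [mem_ball, Real.dist_eq, abs_lt]
      constructor <;> linarith
    have := card_filter_ball_le P hr one_pos hsep (c := (1/2 : ℝ))
    rw [h1] at this
    have h2 : (P.card : ℝ) ≤ (⌊2*1/r⌋₊ : ℝ) + 2 := by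
      have h3 : 2*1/r - 1 < (⌊2*1/r⌋₊ : ℝ) := Nat.sub_one_lt_floor _
      linarith
    exact_mod_cast h2
  obtain ⟨P, hPE, hsep, hPcard⟩ := Nat.sSup_mem hAne hbd
  refine ⟨P, hPE, hsep, ?_⟩
  have hcov : E ⊆ ⋃ p ∈ P, Metric.ball p r := by
    intro e he
    by_contra hec
    have hfar : ∀ p ∈ P, r ≤ |e - p| := by
      intro p hp
      by_contra hlt
      push_neg at hlt
      exact hec (mem_iUnion₂.2 ⟨p, hp, by rwa [mem_ball, Real.dist_eq]⟩)
    have heP : e ∉ P := by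
      intro hem
      have := hfar e hem
      simp at this
      linarith
    have : P.card + 1 ∈ A := by
      refine ⟨insert e P, ?_, ?_, by rw [Finset.card_insert_of_notMem heP]⟩
      · intro x hx
        rcases Finset.mem_insert.1 (by exact_mod_cast hx) with rfl | hx'
        · exact he
        · exact hPE hx'
      · intro p hp q hq hpq
        rcases Finset.mem_insert.1 hp with rfl | hp' <;>
          rcases Finset.mem_insert.1 hq with rfl | hq'
        · exact absurd rfl hpq
        · exact hfar q hq'
        · have := hfar p hp'; rwa [abs_sub_comm] at this
        · exact hsep p hp' q hq' hpq
    have := le_csSup hbd this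
    rw [hPcard] at this
    omega
  exact le_trans (coverNum_le_card P hcov) (le_of_eq rfl)

def LS (E : Set ℝ) : Set ℝ :=
  {s : ℝ | 0 ≤ s ∧ ∃ C > 0, ∀ x ∈ E, ∀ R, 0 < R → R < Metric.diam E →
    ∀ r, 0 < r → r < R →
      C * (R / r) ^ s ≤ (coverNum (Metric.ball x R ∩ E) r : ℝ)}

lemma lowerDim_eq_sSup (E : Set ℝ) : lowerDim E = sSup (LS E) := rfl

lemma zero_mem_LS {E : Set ℝ} (hE : E ⊆ Icc 0 1) : (0 : ℝ) ∈ LS E := by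
  refine ⟨le_refl 0, 1, one_pos, ?_⟩
  intro x hx R hR hRd r hr hrR
  rw [Real.rpow_zero, mul_one]
  have h1 : (1 : ℕ) ≤ coverNum (Metric.ball x R ∩ E) r :=
    one_le_coverNum (fun z (hz : z ∈ Metric.ball x R ∩ E) => hE hz.2)
      ⟨x, mem_ball_self hR, hx⟩ hr
  exact_mod_cast h1

lemma lowerDim_nonneg {E : Set ℝ} (hE : E ⊆ Icc 0 1) : 0 ≤ lowerDim E := by
  rw [lowerDim_eq_sSup]
  by_cases hb : BddAbove (LS E)
  · exact le_csSup hb (zero_mem_LS hE)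
  · rw [Real.sSup_of_not_bddAbove hb]

lemma diam_le_one {E : Set ℝ} (hE : E ⊆ Icc 0 1) : Metric.diam E ≤ 1 := by
  have := Metric.diam_mono hE (isBounded_Icc 0 1)
  rwa [Real.diam_Icc zero_le_one, sub_zero] at this

lemma bddAbove_LS {E : Set ℝ} (hE : E ⊆ Icc 0 1) (hd : 0 < Metric.diam E) :
    BddAbove (LS E) := by
  refine ⟨1, ?_⟩
  rintro u ⟨hu0, C, hC, hcov⟩
  by_contra hu1
  push_neg at hu1
  have hEne : E.Nonempty := by
    rcases eq_empty_or_nonempty E with rfl | h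
    · simp [Metric.diam_empty] at hd
    · exact h
  obtain ⟨x, hx⟩ := hEne
  set R : ℝ := Metric.diam E / 2 with hR
  have hR0 : 0 < R := by positivity
  have hRd : R < Metric.diam E := by rw [hR]; linarith
  have hR1 : R ≤ 1 / 2 := by
    have := diam_le_one hE
    rw [hR]; linarith
  have hRu : (0:ℝ) < C * R ^ u / 2 := by
    have := Real.rpow_pos_of_pos hR0 u
    positivity
  set x₀ : ℝ := (C * R ^ u / 2) ^ (1 / (u - 1)) with hx₀
  have hx₀pos : 0 < x₀ := Real.rpow_pos_of_pos hRu _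
  set r : ℝ := min (R / 2) (x₀ / 2) with hr
  have hr0 : 0 < r := lt_min (by positivity) (by positivity)
  have hrR : r < R := lt_of_le_of_lt (min_le_left _ _) (by linarith)
  have hkey := hcov x hx R hR0 hRd r hr0 hrR
  -- upper bound on coverNum
  have hcn : (coverNum (Metric.ball x R ∩ E) r : ℝ) ≤ 2 / r := by
    have h1 := coverNum_le_unit (fun z (hz : z ∈ Metric.ball x R ∩ E) => hE hz.2) hr0
    have hrhalf : r ≤ 1 / 2 := le_trans (min_le_left _ _) (by linarith)
    have h4 : (1:ℝ) ≤ 1 / r := by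
      rw [le_div_iff₀ hr0]; linarith
    have h5 : 2 / r = 1 / r + 1 / r := by ring
    linarith
  -- lower bound blows up
  have hpow : r ^ (u - 1) < C * R ^ u / 2 := by
    have hlt : r < x₀ := lt_of_le_of_lt (min_le_right _ _) (by linarith)
    have h2 : r ^ (u - 1) < x₀ ^ (u - 1) :=
      Real.rpow_lt_rpow hr0.le hlt (by linarith)
    have h3 : x₀ ^ (u - 1) = C * R ^ u / 2 := by
      rw [hx₀, ← Real.rpow_mul hRu.le, one_div,
        inv_mul_cancel₀ (by intro h; apply absurd (by linarith : u = 1) (by linarith)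
          : u - 1 ≠ 0), Real.rpow_one]
    rwa [h3] at h2
  have hdiv : (R / r) ^ u = R ^ u / r ^ u := Real.div_rpow hR0.le hr0.le u
  rw [hdiv] at hkey
  have hru : (0:ℝ) < r ^ u := Real.rpow_pos_of_pos hr0 u
  have hkey2 : C * R ^ u / r ^ u ≤ 2 / r := by
    calc C * R ^ u / r ^ u = C * (R ^ u / r ^ u) := by ring
    _ ≤ (coverNum (Metric.ball x R ∩ E) r : ℝ) := hkey
    _ ≤ 2 / r := hcn
  have hkey3 : C * R ^ u * r ≤ 2 * r ^ u := (div_le_div_iff₀ hru hr0).1 hkey2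
  have hsplit : r ^ u = r ^ (u - 1) * r := by
    have h := Real.rpow_add_one hr0.ne' (u - 1)
    rwa [sub_add_cancel] at h
  rw [hsplit] at hkey3
  have : C * R ^ u ≤ 2 * r ^ (u - 1) := by
    have := (mul_le_mul_iff_left₀ hr0).1 (by linarith : (C * R ^ u) * r ≤ (2 * r ^ (u - 1)) * r)
    linarith
  linarith

lemma isMoran_singleton {x : ℝ} (hx : x ∈ Icc 0 1) : IsMoran {x} := by
  obtain ⟨hx0, hx1⟩ := hx
  refine ⟨1, le_refl 1, fun n => (1/2 : ℝ)^n, fun w => x * (1 - (1/2 : ℝ)^w.length),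
    by norm_num, by simp, fun n => by positivity, ?_, ?_, ?_⟩
  · intro w c
    simp only [List.length_append, List.length_cons, List.length_nil]
    apply Icc_subset_Icc
    · have : ((1:ℝ)/2)^(w.length+1) ≤ (1/2)^w.length := by
        apply pow_le_pow_of_le_one (by norm_num) (by norm_num) (Nat.le_succ _)
      nlinarith
    · have : ((1:ℝ)/2)^(w.length+1) ≤ (1/2)^w.length := by
        apply pow_le_pow_of_le_one (by norm_num) (by norm_num) (Nat.le_succ _)
      nlinarith
  · intro w c c' h
    exact absurd (Subsingleton.elim c c') h
  · ext z
    simp only [mem_singleton_iff, mem_iInter]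
    constructor
    · rintro rfl n
      refine mem_iUnion.2 ⟨⟨List.replicate n 0, List.length_replicate⟩, ?_⟩
      simp only [List.length_replicate]
      constructor
      · nlinarith [pow_nonneg (by norm_num : (0:ℝ) ≤ 1/2) n, pow_le_one₀ (by norm_num : (0:ℝ) ≤ 1/2) (by norm_num : (1:ℝ)/2 ≤ 1) (n := n)]
      · nlinarith [pow_nonneg (by norm_num : (0:ℝ) ≤ 1/2) n, pow_le_one₀ (by norm_num : (0:ℝ) ≤ 1/2) (by norm_num : (1:ℝ)/2 ≤ 1) (n := n)]
    · intro hz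
      by_contra hne
      have habs : 0 < |z - x| := abs_pos.2 (sub_ne_zero.2 hne)
      obtain ⟨n, hn⟩ := exists_pow_lt_of_lt_one habs (by norm_num : (1:ℝ)/2 < 1)
      obtain ⟨w, hw⟩ := mem_iUnion.1 (hz n)
      have hlen := w.2
      obtain ⟨h1, h2⟩ := hw
      rw [hlen] at h1 h2
      have hp0 : (0:ℝ) ≤ (1/2:ℝ)^n := by positivity
      have hle : |z - x| ≤ (1/2:ℝ)^n := by
        rw [abs_le]
        constructor <;> nlinarith
      linarith

/-- clamped interval basic facts -/
lemma clamp_facts {y l : ℝ} (hy0 : 0 ≤ y) (hy1 : y ≤ 1) (hl0 : 0 < l) (hl1 : l ≤ 1) :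
    0 ≤ max 0 (min (y - l/2) (1 - l)) ∧ max 0 (min (y - l/2) (1 - l)) + l ≤ 1 ∧
    max 0 (min (y - l/2) (1 - l)) ≤ y ∧ y ≤ max 0 (min (y - l/2) (1 - l)) + l ∧
    (∀ z, 0 ≤ z → z ≤ 1 → |z - y| < l/2 →
      max 0 (min (y - l/2) (1 - l)) ≤ z ∧ z ≤ max 0 (min (y - l/2) (1 - l)) + l) ∧
    (∀ z, max 0 (min (y - l/2) (1 - l)) ≤ z → z ≤ max 0 (min (y - l/2) (1 - l)) + l →
      |z - y| ≤ l) := by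
  rcases le_total (y - l/2) (1 - l) with hm | hm
  · rw [min_eq_left hm]
    rcases le_total 0 (y - l/2) with h0 | h0
    · rw [max_eq_right h0]
      refine ⟨h0, by linarith, by linarith, by linarith, ?_, ?_⟩
      · intro z hz0 hz1 hzy
        rw [abs_lt] at hzy
        constructor <;> linarith [hzy.1, hzy.2]
      · intro z hz1 hz2
        rw [abs_le]
        constructor <;> linarith
    · rw [max_eq_left h0]
      refine ⟨le_refl 0, by linarith, hy0, by linarith, ?_, ?_⟩
      · intro z hz0 hz1 hzy
        rw [abs_lt] at hzy
        constructor <;> linarith [hzy.1, hzy.2]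
      · intro z hz1 hz2
        rw [abs_le]
        constructor <;> linarith
  · rw [min_eq_right hm]
    have h0 : 0 ≤ 1 - l := by linarith
    rw [max_eq_right h0]
    refine ⟨h0, by linarith, by linarith, by linarith, ?_, ?_⟩
    · intro z hz0 hz1 hzy
      rw [abs_lt] at hzy
      constructor <;> linarith [hzy.1, hzy.2]
    · intro z hz1 hz2
      rw [abs_le]
      constructor <;> linarith

lemma clamp_sep_aux {y₁ y₂ l : ℝ} (h01 : 0 ≤ y₁) (h12 : y₂ ≤ 1)
    (hl0 : 0 < l) (hl3 : l ≤ 1/3) (hsep : y₁ + 3 * l ≤ y₂) :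
    max 0 (min (y₁ - l/2) (1 - l)) + 2 * l ≤ max 0 (min (y₂ - l/2) (1 - l)) := by
  have hy2pos : 0 < min (y₂ - l/2) (1 - l) := by
    apply lt_min <;> linarith
  rw [max_eq_right hy2pos.le]
  have hmin1 : min (y₁ - l/2) (1 - l) = y₁ - l/2 := min_eq_left (by linarith)
  rw [hmin1]
  rcases le_total (y₁ - l/2) 0 with h0 | h0
  · rw [max_eq_left h0]
    apply le_min <;> linarith
  · rw [max_eq_right h0]
    apply le_min <;> linarith

lemma clamp_sep {y₁ y₂ l : ℝ} (h01 : 0 ≤ y₁) (h11 : y₁ ≤ 1) (h02 : 0 ≤ y₂) (h12 : y₂ ≤ 1)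
    (hl0 : 0 < l) (hl3 : l ≤ 1/3) (hsep : 3 * l ≤ |y₁ - y₂|) :
    2 * l ≤ |max 0 (min (y₁ - l/2) (1 - l)) - max 0 (min (y₂ - l/2) (1 - l))| := by
  rcases le_total y₁ y₂ with h | h
  · have : y₁ + 3 * l ≤ y₂ := by
      rw [abs_sub_comm, abs_of_nonneg (by linarith)] at hsep; linarith
    have := clamp_sep_aux h01 h12 hl0 hl3 this
    rw [abs_sub_comm, abs_of_nonneg (by linarith)]
    linarith
  · have : y₂ + 3 * l ≤ y₁ := by
      rw [abs_of_nonneg (by linarith)] at hsep; linarith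
    have := clamp_sep_aux h02 h11 hl0 hl3 this
    rw [abs_of_nonneg (by linarith)]
    linarith

noncomputable def moranAux (k : ℕ) (Λ : ℝ) (x₀ : ℝ) (Y : ℝ → ℕ → Fin k → ℝ) :
    List (Fin k) → ℝ × ℝ
  | [] => (x₀, 0)
  | c :: w =>
      (Y (moranAux k Λ x₀ Y w).1 w.length c,
        max 0 (min (Y (moranAux k Λ x₀ Y w).1 w.length c - Λ^(w.length+1)/2)
          (1 - Λ^(w.length+1))))

/-- The Moran construction inside `F`. -/
lemma moran_construction (k : ℕ) (Λ : ℝ) (hΛ0 : 0 < Λ) (hΛ : Λ ≤ 1/13)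
    (F : Set ℝ) (hF : F ⊆ Icc 0 1) (x₀ : ℝ) (hx₀ : x₀ ∈ F)
    (hstep : ∀ x ∈ F, ∀ n : ℕ, ∃ y : Fin k → ℝ, (∀ i, y i ∈ F) ∧
      (∀ i, |y i - x| < Λ^n/4) ∧ (∀ i j, i ≠ j → 3*Λ^(n+1) ≤ |y i - y j|)) :
    ∃ a : List (Fin k) → ℝ, a [] = 0 ∧
      (∀ (w : List (Fin k)) (c : Fin k),
        Set.Icc (a (w ++ [c])) (a (w ++ [c]) + Λ^(w.length + 1)) ⊆
          Set.Icc (a w) (a w + Λ^w.length)) ∧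
      (∀ (w : List (Fin k)) (c c' : Fin k), c ≠ c' →
        2 * Λ^(w.length + 1) ≤ |a (w ++ [c]) - a (w ++ [c'])|) ∧
      (∀ w : List (Fin k), Set.Icc (a w) (a w + Λ^w.length) ⊆ Icc 0 1) ∧
      (∀ w : List (Fin k), ∃ p ∈ F, p ∈ Set.Icc (a w) (a w + Λ^w.length)) := by
  classical
  -- the choice function
  set Y : ℝ → ℕ → Fin k → ℝ := fun x n c =>
    if h : x ∈ F then (hstep x h n).choose c else x₀ with hY
  have hYspec : ∀ x (hx : x ∈ F) (n : ℕ),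
      (∀ c, Y x n c ∈ F) ∧ (∀ c, |Y x n c - x| < Λ^n/4) ∧
      (∀ c c', c ≠ c' → 3*Λ^(n+1) ≤ |Y x n c - Y x n c'|) := by
    intro x hx n
    have hs := (hstep x hx n).choose_spec
    simp only [hY, dif_pos hx]
    exact ⟨hs.1, hs.2.1, hs.2.2⟩
  set g : List (Fin k) → ℝ × ℝ := moranAux k Λ x₀ Y with hg
  have hgnil : g [] = (x₀, 0) := rfl
  have hgcons : ∀ (c : Fin k) (w : List (Fin k)),
      g (c :: w) = (Y (g w).1 w.length c,
        max 0 (min (Y (g w).1 w.length c - Λ^(w.length+1)/2) (1 - Λ^(w.length+1)))) := by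
    intro c w; rfl
  -- powers
  have hpow1 : ∀ n : ℕ, (0:ℝ) < Λ^n := fun n => pow_pos hΛ0 n
  have hpowle1 : ∀ n : ℕ, Λ^n ≤ 1 :=
    fun n => pow_le_one₀ hΛ0.le (by linarith)
  have hpow4 : ∀ n : ℕ, Λ^(n+1) ≤ Λ^n/4 := by
    intro n
    rw [pow_succ]
    calc Λ^n * Λ ≤ Λ^n * (1/13) := by
          apply mul_le_mul_of_nonneg_left hΛ (hpow1 n).le
    _ ≤ Λ^n/4 := by linarith [hpow1 n]
  -- main invariant, by induction on the reversed word
  have hinv : ∀ v : List (Fin k),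
      (g v).1 ∈ F ∧
      (g v).1 ∈ Icc ((g v).2) ((g v).2 + Λ^v.length) ∧
      (∀ z, 0 ≤ z → z ≤ 1 → |z - (g v).1| < Λ^v.length/2 →
        z ∈ Icc ((g v).2) ((g v).2 + Λ^v.length)) ∧
      Icc ((g v).2) ((g v).2 + Λ^v.length) ⊆ Icc 0 1 := by
    intro v
    induction v with
    | nil =>
      rw [hgnil]
      obtain ⟨h0, h1⟩ := hF hx₀
      refine ⟨hx₀, ⟨h0, by simpa using h1⟩, ?_, ?_⟩
      · intro z hz0 hz1 _
        simp only [List.length_nil, pow_zero]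
        exact ⟨hz0, by linarith⟩
      · intro z hz
        simp only [List.length_nil, pow_zero] at hz
        exact ⟨hz.1, by linarith [hz.2]⟩
    | cons c w ih =>
      obtain ⟨hxF, hxI, hinv', hsub⟩ := ih
      set x := (g w).1
      set n := w.length
      obtain ⟨hyF, hyclose, -⟩ := hYspec x hxF n
      set y := Y x n c with hy
      obtain ⟨hy0, hy1⟩ := hF (hyF c)
      have hcl := clamp_facts hy0 hy1 (hpow1 (n+1)) (hpowle1 (n+1))
      rw [hgcons c w]
      simp only [List.length_cons]
      refine ⟨hyF c, ⟨hcl.2.2.1, hcl.2.2.2.1⟩, ?_, ?_⟩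
      · intro z hz0 hz1 hzy
        exact ⟨(hcl.2.2.2.2.1 z hz0 hz1 hzy).1, (hcl.2.2.2.2.1 z hz0 hz1 hzy).2⟩
      · intro z hz
        have h1 := hcl.1
        have h2 := hcl.2.1
        exact ⟨by linarith [hz.1], by linarith [hz.2]⟩
  -- the candidate
  refine ⟨fun w => (g w.reverse).2, rfl, ?_, ?_, ?_, ?_⟩
  · -- nesting
    intro w c
    have hrev : (w ++ [c]).reverse = c :: w.reverse := by simp
    have hlen : w.reverse.length = w.length := List.length_reverse
    obtain ⟨hxF, hxI, hinv', hsub⟩ := hinv w.reverse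
    set x := (g w.reverse).1
    obtain ⟨hyF, hyclose, -⟩ := hYspec x hxF w.reverse.length
    set y := Y x w.reverse.length c with hy
    obtain ⟨hy0, hy1⟩ := hF (hyF c)
    have hcl := clamp_facts hy0 hy1 (hpow1 (w.reverse.length+1)) (hpowle1 (w.reverse.length+1))
    intro z hz
    simp only [hrev, hgcons c w.reverse] at hz
    simp only [hrev, hgcons c w.reverse]
    -- z is within Λ^(n+1) of y, hence within Λ^n/2 of x; also z ∈ [0,1]
    have hzy : |z - y| ≤ Λ^(w.reverse.length+1) := by
      rw [← hlen] at hz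
      exact hcl.2.2.2.2.2 z hz.1 hz.2
    have hz01 : z ∈ Icc (0:ℝ) 1 := by
      rw [← hlen] at hz
      refine ⟨le_trans hcl.1 hz.1, le_trans hz.2 ?_⟩
      exact hcl.2.1
    have hzx : |z - x| < Λ^w.reverse.length/2 := by
      have h1 := hyclose c
      calc |z - x| ≤ |z - y| + |y - x| := by
            have := abs_sub_le z y x; linarith [this]
      _ < Λ^(w.reverse.length+1) + Λ^w.reverse.length/4 := by linarith
      _ ≤ Λ^w.reverse.length/4 + Λ^w.reverse.length/4 := by linarith [hpow4 w.reverse.length]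
      _ = Λ^w.reverse.length/2 := by ring
    have := hinv' z hz01.1 hz01.2 hzx
    rw [hlen] at this
    exact this
  · -- separation
    intro w c c' hcc
    have hrev : ∀ d : Fin k, (w ++ [d]).reverse = d :: w.reverse := by intro d; simp
    have hlen : w.reverse.length = w.length := List.length_reverse
    obtain ⟨hxF, -, -, -⟩ := hinv w.reverse
    set x := (g w.reverse).1
    obtain ⟨hyF, -, hysep⟩ := hYspec x hxF w.reverse.length
    simp only [hrev c, hrev c', hgcons c w.reverse, hgcons c' w.reverse]
    rw [← hlen]
    have h1 := hF (hyF c)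
    have h2 := hF (hyF c')
    have hl3 : Λ^(w.reverse.length+1) ≤ 1/3 := by
      calc Λ^(w.reverse.length+1) ≤ Λ^(0+1) := by
            apply pow_le_pow_of_le_one hΛ0.le (by linarith) (by omega)
      _ = Λ := by ring
      _ ≤ 1/3 := by linarith
    exact clamp_sep h1.1 h1.2 h2.1 h2.2 (hpow1 _) hl3 (hysep c c' hcc)
  · -- intervals inside [0,1]
    intro w
    have := (hinv w.reverse).2.2.2
    rwa [List.length_reverse] at this
  · -- each interval contains a point of F
    intro w
    obtain ⟨hxF, hxI, -, -⟩ := hinv w.reverse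
    refine ⟨(g w.reverse).1, hxF, ?_⟩
    rwa [List.length_reverse] at hxI

lemma finite_words (k n : ℕ) : Finite {w : List (Fin k) // w.length = n} := by
  refine Finite.of_injective
    (fun w : {w : List (Fin k) // w.length = n} =>
      (fun i : Fin n => w.1.get (Fin.cast w.2.symm i))) ?_
  intro u v huv
  ext1
  apply List.ext_get (by rw [u.2, v.2])
  intro i h1 h2
  have := congrFun huv ⟨i, by rw [← u.2]; exact h1⟩
  simpa using this

section MoranSet

variable {k : ℕ} {Λ : ℝ} {a : List (Fin k) → ℝ}

/-- prefix nesting -/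
lemma Iw_prefix
    (hnest : ∀ (w : List (Fin k)) (c : Fin k),
      Set.Icc (a (w ++ [c])) (a (w ++ [c]) + Λ^(w.length + 1)) ⊆
        Set.Icc (a w) (a w + Λ^w.length)) :
    ∀ (u w : List (Fin k)),
      Set.Icc (a (w ++ u)) (a (w ++ u) + Λ^(w ++ u).length) ⊆
        Set.Icc (a w) (a w + Λ^w.length) := by
  intro u
  induction u with
  | nil => intro w; simp
  | cons c u' ih =>
    intro w
    have h1 : w ++ c :: u' = (w ++ [c]) ++ u' := by simp
    rw [h1]
    refine le_trans (ih (w ++ [c])) ?_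
    have := hnest w c
    simpa using this

/-- every construction interval contains a point of the limit set -/
lemma moran_meets (hk : 1 ≤ k) (hΛ0 : 0 < Λ)
    (hnest : ∀ (w : List (Fin k)) (c : Fin k),
      Set.Icc (a (w ++ [c])) (a (w ++ [c]) + Λ^(w.length + 1)) ⊆
        Set.Icc (a w) (a w + Λ^w.length)) :
    ∀ w : List (Fin k),
      ∃ z, z ∈ (⋂ n : ℕ, ⋃ v : {v : List (Fin k) // v.length = n},
          Set.Icc (a v.1) (a v.1 + Λ^n)) ∧
        z ∈ Set.Icc (a w) (a w + Λ^w.length) := by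
  intro w
  set c0 : Fin k := ⟨0, hk⟩ with hc0
  set G : ℕ → List (Fin k) := fun m => w ++ List.replicate m c0 with hG
  have hGlen : ∀ m, (G m).length = w.length + m := by
    intro m; simp [hG]
  have hGsucc : ∀ m, G (m + 1) = G m ++ [c0] := by
    intro m
    simp only [hG]
    rw [List.append_assoc]
    congr 1
    rw [← List.replicate_succ']
  have hstep : ∀ m, Set.Icc (a (G (m+1))) (a (G (m+1)) + Λ^(w.length + (m+1))) ⊆
      Set.Icc (a (G m)) (a (G m) + Λ^(w.length + m)) := by
    intro m
    have := hnest (G m) c0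
    rw [← hGsucc m, hGlen m] at this
    convert this using 3 <;> rw [Nat.add_assoc]
  have hpow : ∀ m : ℕ, (0:ℝ) < Λ^m := fun m => pow_pos hΛ0 m
  set A : ℕ → ℝ := fun m => a (G m) with hA
  set B : ℕ → ℝ := fun m => a (G m) + Λ^(w.length + m) with hB
  have hAB : ∀ m, A m ≤ B m := fun m => by
    simp only [hA, hB]; linarith [hpow (w.length + m)]
  have hstep' : ∀ m, A m ≤ A (m+1) ∧ B (m+1) ≤ B m := by
    intro m
    have h := hstep m
    have hne := hAB (m+1)
    rw [Set.Icc_subset_Icc_iff hne] at h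
    exact ⟨h.1, h.2⟩
  have hAmono : Monotone A := monotone_nat_of_le_succ (fun m => (hstep' m).1)
  have hBanti : Antitone B := antitone_nat_of_succ_le (fun m => (hstep' m).2)
  have hbdd : BddAbove (Set.range A) := by
    refine ⟨B 0, ?_⟩
    rintro x ⟨m, rfl⟩
    exact le_trans (hAB m) (hBanti (Nat.zero_le m))
  set z : ℝ := ⨆ m, A m with hz
  have hzmem : ∀ m, z ∈ Set.Icc (A m) (B m) := by
    intro m
    constructor
    · exact le_ciSup hbdd m
    · apply ciSup_le
      intro i
      rcases le_total i m with h | h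
      · exact le_trans (hAmono h) (hAB m)
      · exact le_trans (hAB i) (hBanti h)
  refine ⟨z, ?_, ?_⟩
  · rw [Set.mem_iInter]
    intro n
    rcases le_or_gt w.length n with h | h
    · refine Set.mem_iUnion.2 ⟨⟨G (n - w.length), by rw [hGlen]; omega⟩, ?_⟩
      have := hzmem (n - w.length)
      simp only [hA, hB] at this
      have he : w.length + (n - w.length) = n := by omega
      rw [he] at this
      exact this
    · have hz0 := hzmem 0
      simp only [hA, hB, hG, List.replicate_zero, List.append_nil, Nat.add_zero] at hz0
      refine Set.mem_iUnion.2 ⟨⟨w.take n, by rw [List.length_take]; omega⟩, ?_⟩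
      have hsplit : w = w.take n ++ w.drop n := (List.take_append_drop n w).symm
      have hsub := Iw_prefix hnest (w.drop n) (w.take n)
      rw [← hsplit] at hsub
      have hlen : (w.take n).length = n := by rw [List.length_take]; omega
      rw [hlen] at hsub
      exact hsub hz0
  · have hz0 := hzmem 0
    simp only [hA, hB, hG, List.replicate_zero, List.append_nil, Nat.add_zero] at hz0
    exact hz0

/-- points in the parts corresponding to distinct words of the same length are
separated -/
lemma moran_sep_points (hΛ0 : 0 < Λ) (hΛ1 : Λ ≤ 1)
    (hnest : ∀ (w : List (Fin k)) (c : Fin k),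
      Set.Icc (a (w ++ [c])) (a (w ++ [c]) + Λ^(w.length + 1)) ⊆
        Set.Icc (a w) (a w + Λ^w.length))
    (hsep : ∀ (w : List (Fin k)) (c c' : Fin k), c ≠ c' →
      2 * Λ^(w.length + 1) ≤ |a (w ++ [c]) - a (w ++ [c'])|) :
    ∀ (u v w : List (Fin k)), u.length = v.length → u ≠ v →
      ∀ p q, p ∈ Set.Icc (a (w ++ u)) (a (w ++ u) + Λ^(w ++ u).length) →
        q ∈ Set.Icc (a (w ++ v)) (a (w ++ v) + Λ^(w ++ v).length) →
        Λ^(w ++ u).length ≤ |p - q| := by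
  intro u
  induction u with
  | nil =>
    intro v w hlen hne
    exact absurd (List.eq_nil_of_length_eq_zero hlen.symm).symm hne
  | cons c u' ih =>
    intro v w hlen hne
    rcases v with _ | ⟨c', v'⟩
    · simp at hlen
    intro p q hp hq
    have hlen' : u'.length = v'.length := by simpa using hlen
    by_cases hcc : c = c'
    · subst hcc
      have hne' : u' ≠ v' := fun h => hne (by rw [h])
      have h1 : w ++ c :: u' = (w ++ [c]) ++ u' := by simp
      have h2 : w ++ c :: v' = (w ++ [c]) ++ v' := by simp
      rw [h1] at hp ⊢
      rw [h2] at hq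
      exact ih v' (w ++ [c]) hlen' hne' p q hp hq
    · -- different first letters
      have h1 : w ++ c :: u' = (w ++ [c]) ++ u' := by simp
      have h2 : w ++ c' :: v' = (w ++ [c']) ++ v' := by simp
      rw [h1] at hp
      rw [h2] at hq
      have hp' := Iw_prefix hnest u' (w ++ [c]) hp
      have hq' := Iw_prefix hnest v' (w ++ [c']) hq
      have hs := hsep w c c' hcc
      set m := w.length + 1 with hm
      have hlm : (w ++ [c]).length = m := by simp [hm]
      have hlm' : (w ++ [c']).length = m := by simp [hm]
      rw [hlm] at hp'
      rw [hlm'] at hq'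
      have hpowpos : (0:ℝ) < Λ^m := pow_pos hΛ0 m
      have key : Λ^m ≤ |p - q| := by
        rcases le_total (a (w ++ [c])) (a (w ++ [c'])) with h | h
        · have : 2 * Λ^m ≤ a (w ++ [c']) - a (w ++ [c]) := by
            rw [abs_sub_comm, abs_of_nonneg (by linarith)] at hs
            linarith
          have : Λ^m ≤ q - p := by
            linarith [hp'.2, hq'.1]
          calc Λ^m ≤ q - p := this
          _ ≤ |p - q| := by rw [abs_sub_comm]; exact le_abs_self _
        · have : 2 * Λ^m ≤ a (w ++ [c]) - a (w ++ [c']) := by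
            rw [abs_of_nonneg (by linarith)] at hs
            linarith
          have : Λ^m ≤ p - q := by
            linarith [hq'.2, hp'.1]
          exact le_trans this (le_abs_self _)
      refine le_trans ?_ key
      apply pow_le_pow_of_le_one hΛ0.le hΛ1
      simp [hm]
  end MoranSet

/-- lower bound for the lower dimension of a Moran set -/
lemma moran_mem_LS {k : ℕ} {Λ : ℝ} {a : List (Fin k) → ℝ}
    (hk : 1 ≤ k) (hΛ0 : 0 < Λ) (hΛ : Λ ≤ 1/13)
    (hnest : ∀ (w : List (Fin k)) (c : Fin k),
      Set.Icc (a (w ++ [c])) (a (w ++ [c]) + Λ^(w.length + 1)) ⊆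
        Set.Icc (a w) (a w + Λ^w.length))
    (hsep : ∀ (w : List (Fin k)) (c c' : Fin k), c ≠ c' →
      2 * Λ^(w.length + 1) ≤ |a (w ++ [c]) - a (w ++ [c'])|)
    (hsub01 : ∀ w : List (Fin k), Set.Icc (a w) (a w + Λ^w.length) ⊆ Icc 0 1)
    (u : ℝ) (hu0 : 0 ≤ u) (hku : (1/Λ) ^ u ≤ (k : ℝ)) :
    u ∈ LS (⋂ n : ℕ, ⋃ w : {w : List (Fin k) // w.length = n},
      Set.Icc (a w.1) (a w.1 + Λ^n)) := by
  classical
  have hΛ1 : Λ ≤ 1 := by linarith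
  have hΛlt1 : Λ < 1 := by linarith
  set F' : Set ℝ := ⋂ n : ℕ, ⋃ w : {w : List (Fin k) // w.length = n},
      Set.Icc (a w.1) (a w.1 + Λ^n) with hF'
  have hF'sub : F' ⊆ Icc 0 1 := by
    intro z hz
    have h0 := Set.mem_iInter.1 hz 0
    obtain ⟨w, hw⟩ := Set.mem_iUnion.1 h0
    have := hsub01 w.1
    rw [w.2] at this
    exact this hw
  set M : ℕ := ⌊2/Λ⌋₊ + 1 with hM
  have hMpos : (0:ℝ) < M := by positivity
  have hMge : 2/Λ + 1 ≤ (M:ℝ) + 1 := by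
    have := Nat.lt_floor_add_one (2/Λ)
    push_cast [hM]
    linarith
  set C₂ : ℝ := (Λ/2)^u / M with hC₂
  have hC₂pos : 0 < C₂ := by
    have : (0:ℝ) < (Λ/2)^u := Real.rpow_pos_of_pos (by linarith) u
    positivity
  refine ⟨hu0, C₂, hC₂pos, ?_⟩
  intro x hx R hR0 hRd r hr0 hrR
  have hdiam1 : Metric.diam F' ≤ 1 := diam_le_one hF'sub
  have hR1 : R < 1 := lt_of_lt_of_le hRd hdiam1
  -- the starting generation n
  have hexn : ∃ n : ℕ, Λ^n ≤ R/2 := by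
    obtain ⟨n, hn⟩ := exists_pow_lt_of_lt_one (by linarith : (0:ℝ) < R/2) hΛlt1
    exact ⟨n, hn.le⟩
  set n : ℕ := Nat.find hexn with hn
  have hnspec : Λ^n ≤ R/2 := Nat.find_spec hexn
  have hnpos : 0 < n := by
    rcases Nat.eq_zero_or_pos n with h0 | h
    · exfalso
      have := hnspec
      rw [h0, pow_zero] at this
      linarith
    · exact h
  have hnlow : Λ * (R/2) < Λ^n := by
    obtain ⟨m, hm⟩ : ∃ m, n = m + 1 := ⟨n - 1, by omega⟩
    have hmin : ¬ (Λ^m ≤ R/2) := Nat.find_min hexn (by omega)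
    push_neg at hmin
    rw [hm]
    calc Λ * (R/2) < Λ * Λ^m := by
          apply mul_lt_mul_of_pos_left hmin hΛ0
    _ = Λ^(m+1) := by ring
  -- the word containing x at generation n
  obtain ⟨w₀, hw₀⟩ := Set.mem_iUnion.1 (Set.mem_iInter.1 hx n)
  set w : List (Fin k) := w₀.1 with hw
  have hwlen : w.length = n := w₀.2
  have hIball : Set.Icc (a w) (a w + Λ^n) ⊆ Metric.ball x R := by
    intro z hz
    rw [mem_ball, Real.dist_eq, abs_lt]
    have h1 := hw₀.1
    have h2 := hw₀.2
    have hpn : (0:ℝ) < Λ^n := pow_pos hΛ0 n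
    constructor <;> [linarith [hz.1, hz.2]; linarith [hz.1, hz.2]]
  -- the stopping generation j
  have hexj : ∃ j : ℕ, Λ^(n+j) ≤ r := by
    obtain ⟨m, hm⟩ := exists_pow_lt_of_lt_one hr0 hΛlt1
    refine ⟨m, le_trans ?_ hm.le⟩
    apply pow_le_pow_of_le_one hΛ0.le hΛ1
    omega
  set j : ℕ := Nat.find hexj with hj
  have hjspec : Λ^(n+j) ≤ r := Nat.find_spec hexj
  -- the k^j points
  set ζ : (Fin j → Fin k) → ℝ := fun f =>
    (moran_meets hk hΛ0 hnest (w ++ List.ofFn f)).choose with hζ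
  have hζspec : ∀ f, ζ f ∈ F' ∧
      ζ f ∈ Set.Icc (a (w ++ List.ofFn f)) (a (w ++ List.ofFn f) + Λ^(w ++ List.ofFn f).length) :=
    fun f => (moran_meets hk hΛ0 hnest (w ++ List.ofFn f)).choose_spec
  have hlenwf : ∀ f : Fin j → Fin k, (w ++ List.ofFn f).length = n + j := by
    intro f; simp [hwlen]
  have hζsep : ∀ f f', f ≠ f' → Λ^(n+j) ≤ |ζ f - ζ f'| := by
    intro f f' hff
    have hne : List.ofFn f ≠ List.ofFn f' := by
      intro h
      exact hff (List.ofFn_injective h)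
    have := moran_sep_points hΛ0 hΛ1 hnest hsep (List.ofFn f) (List.ofFn f') w
      (by simp) hne (ζ f) (ζ f') (hζspec f).2 (hζspec f').2
    rwa [hlenwf f] at this
  set E : Set ℝ := Metric.ball x R ∩ F' with hE
  have hEsub : E ⊆ Icc 0 1 := fun z hz => hF'sub hz.2
  have hpnj : (0:ℝ) < Λ^(n+j) := pow_pos hΛ0 (n+j)
  have hζinj : Function.Injective ζ := by
    intro f f' hff
    by_contra hne
    have := hζsep f f' hne
    rw [hff] at this
    simp at this
    linarith
  set P : Finset ℝ := Finset.image ζ Finset.univ with hP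
  have hPcard : P.card = k^j := by
    rw [hP, Finset.card_image_of_injective _ hζinj, Finset.card_univ]
    simp [Fintype.card_fun]
  have hPE : ↑P ⊆ E := by
    intro p hp
    obtain ⟨f, -, rfl⟩ := Finset.mem_image.1 (by exact_mod_cast hp)
    refine ⟨?_, (hζspec f).1⟩
    apply hIball
    have h2 := (hζspec f).2
    have := Iw_prefix hnest (List.ofFn f) w h2
    rwa [hwlen] at this
  have hPsep : ∀ p ∈ P, ∀ q ∈ P, p ≠ q → Λ^(n+j) ≤ |p - q| := by
    intro p hp q hq hpq
    obtain ⟨f, -, rfl⟩ := Finset.mem_image.1 hp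
    obtain ⟨f', -, rfl⟩ := Finset.mem_image.1 hq
    exact hζsep f f' (fun h => hpq (by rw [h]))
  -- counting: card P ≤ coverNum E r * M
  have hcount : (P.card : ℝ) ≤ (coverNum E r : ℝ) * M := by
    rcases Nat.eq_zero_or_pos j with hj0 | hjpos
    · -- j = 0 : single point
      have : P.card = 1 := by rw [hPcard, hj0, pow_zero]
      rw [this]
      have h1 : 1 ≤ coverNum E r := one_le_coverNum hEsub ⟨x, mem_ball_self hR0, hx⟩ hr0
      have h1' : (1:ℝ) ≤ (coverNum E r : ℝ) := by exact_mod_cast h1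
      have hM1 : (1:ℝ) ≤ (M:ℝ) := by
        rw [hM]; push_cast; linarith [Nat.cast_nonneg (α := ℝ) ⌊2/Λ⌋₊]
      push_cast
      nlinarith
    · -- j ≥ 1 : each ball of radius r contains at most M points of P
      have hδr : Λ * r < Λ^(n+j) := by
        obtain ⟨m, hm⟩ : ∃ m, j = m + 1 := ⟨j - 1, by omega⟩
        have hmin : ¬ (Λ^(n+m) ≤ r) := by
          refine Nat.find_min hexj ?_
          rw [← hj]
          omega
        push_neg at hmin
        calc Λ * r < Λ * Λ^(n+m) := mul_lt_mul_of_pos_left hmin hΛ0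
        _ = Λ^(n+m+1) := by ring
        _ = Λ^(n+j) := by rw [hm, Nat.add_assoc]
      have hMcount : ∀ c : ℝ, (P.filter (fun p => p ∈ Metric.ball c r)).card ≤ M := by
        intro c
        have := card_filter_ball_le P hpnj hr0 hPsep (c := c)
        have h2 : 2*r/Λ^(n+j) + 1 < (M:ℝ) + 1 := by
          have h3 : 2*r/Λ^(n+j) < 2/Λ := by
            rw [div_lt_div_iff₀ hpnj hΛ0]
            nlinarith
          linarith
        have h4 : ((P.filter (fun p => p ∈ Metric.ball c r)).card : ℝ) < (M:ℝ) + 1 := by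
          linarith
        exact_mod_cast Nat.lt_succ_iff.1 (by exact_mod_cast h4)
      have := card_le_coverNum_mul hEsub hr0 P hPE M hMcount
      exact_mod_cast this
  -- geometric lower bound for k^j
  have hkey : (Λ/2)^u * (R/r)^u ≤ ((k:ℝ))^j := by
    have hXdef : ((1/Λ : ℝ))^j = Λ^n / Λ^(n+j) := by
      rw [pow_add]
      field_simp
      rw [← mul_pow, one_div_mul_cancel hΛ0.ne', one_pow]
    have hX1 : Λ*R/(2*r) ≤ ((1/Λ:ℝ))^j := by
      rw [hXdef]
      rw [div_le_div_iff₀ (by positivity) hpnj]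
      calc Λ*R*Λ^(n+j) ≤ Λ*R*r := by
            apply mul_le_mul_of_nonneg_left hjspec (by positivity)
      _ = Λ*(R/2)*(2*r) := by ring
      _ ≤ Λ^n*(2*r) := by
            apply mul_le_mul_of_nonneg_right hnlow.le (by positivity)
    have hX1' : Λ*R/(2*r) ≤ ((1/Λ:ℝ))^j := hX1
    have h5 : ((Λ*R/(2*r)) : ℝ)^u ≤ (((1/Λ:ℝ))^j)^u := by
      apply Real.rpow_le_rpow (by positivity) hX1' hu0
    have h6 : (((1/Λ:ℝ))^j)^u ≤ ((k:ℝ))^j := by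
      have h7 : (((1/Λ:ℝ))^j)^u = (((1/Λ:ℝ))^u)^j := by
        rw [← Real.rpow_natCast (((1/Λ:ℝ))^u) j, ← Real.rpow_natCast ((1/Λ:ℝ)) j,
          ← Real.rpow_mul (by positivity), ← Real.rpow_mul (by positivity), mul_comm]
      rw [h7]
      apply pow_le_pow_left₀ (Real.rpow_nonneg (by positivity) u) hku
    have h8 : (Λ/2)^u * (R/r)^u = ((Λ*R/(2*r)) : ℝ)^u := by
      rw [← Real.mul_rpow (by positivity) (by positivity)]
      congr 1
      field_simp
    rw [h8]
    exact le_trans h5 h6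
  -- conclusion
  have hfin : C₂ * (R/r)^u * M ≤ (coverNum E r : ℝ) * M := by
    have h9 : C₂ * (R/r)^u * M = (Λ/2)^u * (R/r)^u := by
      rw [hC₂]
      field_simp
    rw [h9]
    calc (Λ/2)^u * (R/r)^u ≤ ((k:ℝ))^j := hkey
    _ = ((k^j : ℕ) : ℝ) := by push_cast; ring
    _ = (P.card : ℝ) := by rw [hPcard]
    _ ≤ (coverNum E r : ℝ) * M := hcount
  have := (mul_le_mul_iff_left₀ hMpos).1 hfin
  exact this

lemma diam_pos_of_lowerDim_pos {E : Set ℝ} (h : 0 < lowerDim E) : 0 < Metric.diam E := by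
  by_contra hd
  push_neg at hd
  have hd0 : Metric.diam E = 0 := le_antisymm hd Metric.diam_nonneg
  have hLS : ∀ u : ℝ, 0 ≤ u → u ∈ LS E := by
    intro u hu
    refine ⟨hu, 1, one_pos, ?_⟩
    intro x hx R hR0 hRd
    exact ((not_lt.2 hR0.le) (hd0 ▸ hRd)).elim
  have hnb : ¬ BddAbove (LS E) := by
    rintro ⟨b, hb⟩
    have h1 := hb (hLS (max b 0 + 1) (by positivity))
    have h2 : b ≤ max b 0 := le_max_left _ _
    linarith [h1]
  rw [lowerDim_eq_sSup, Real.sSup_of_not_bddAbove hnb] at h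
  exact lt_irrefl 0 h

set_option maxHeartbeats 1000000 in
/-- A compact set `F ⊆ [0,1]` with lower dimension `s > 0` contains, for every `ε > 0`,
a compact Moran-construction subset with strong separation and uniform branching number
whose lower dimension is at least `s - ε`. -/
theorem stmt16 (F : Set ℝ) (hFc : IsCompact F) (hF : F ⊆ Set.Icc 0 1)
    (s : ℝ) (hs : lowerDim F = s) (hspos : 0 < s) :
    ∀ ε > (0 : ℝ), ∃ F' : Set ℝ, F' ⊆ F ∧ IsCompact F' ∧ IsMoran F' ∧
      s - ε ≤ lowerDim F' := by
  intro ε hε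
  have hd : 0 < Metric.diam F := diam_pos_of_lowerDim_pos (by rw [hs]; exact hspos)
  have hFne : F.Nonempty := by
    rcases eq_empty_or_nonempty F with rfl | h
    · rw [Metric.diam_empty] at hd; exact absurd hd (lt_irrefl 0)
    · exact h
  obtain ⟨x₀, hx₀⟩ := hFne
  rcases le_or_gt s ε with hcase | hcase
  · -- easy case : a singleton suffices
    refine ⟨{x₀}, singleton_subset_iff.2 hx₀, isCompact_singleton,
      isMoran_singleton (hF hx₀), ?_⟩
    have := lowerDim_nonneg (E := {x₀}) (by simpa using hF hx₀)
    linarith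
  · -- main case
    set u : ℝ := s - ε with hu
    have hu0 : 0 < u := by rw [hu]; linarith
    -- extract an exponent t
    have hLSne : (LS F).Nonempty := ⟨0, zero_mem_LS hF⟩
    have hlt : s - ε/2 < sSup (LS F) := by
      rw [← lowerDim_eq_sSup, hs]; linarith
    obtain ⟨t, htmem, htgt⟩ := exists_lt_of_lt_csSup hLSne hlt
    obtain ⟨ht0, C, hC, hcov⟩ := htmem
    have htu : u + ε/2 ≤ t := by rw [hu]; linarith
    -- parameters
    set d' : ℝ := min (1/4 : ℝ) (Metric.diam F / 2) with hd'
    have hd'0 : 0 < d' := lt_min (by norm_num) (by linarith)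
    have hd'14 : d' ≤ 1/4 := min_le_left _ _
    set B : ℝ := C * (d'/3)^t / 2 with hB
    have hd3 : (0:ℝ) < d'/3 := by linarith
    have hBpos : 0 < B := by
      have := Real.rpow_pos_of_pos hd3 t
      rw [hB]; positivity
    set Λ : ℝ := min (1/13 : ℝ) (min (Metric.diam F/12) (B^(2/ε))) with hΛdef
    have hBrp : 0 < B^(2/ε) := Real.rpow_pos_of_pos hBpos _
    have hΛ0 : 0 < Λ := lt_min (by norm_num) (lt_min (by linarith) hBrp)
    have hΛ13 : Λ ≤ 1/13 := min_le_left _ _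
    have hΛlt1 : Λ < 1 := lt_of_le_of_lt hΛ13 (by norm_num)
    have hΛd : Λ ≤ Metric.diam F / 12 := le_trans (min_le_right _ _) (min_le_left _ _)
    have hΛB' : Λ ≤ B^(2/ε) := le_trans (min_le_right _ _) (min_le_right _ _)
    have hΛB : Λ^(ε/2) ≤ B := by
      calc Λ^(ε/2) ≤ (B^(2/ε))^(ε/2) :=
            Real.rpow_le_rpow hΛ0.le hΛB' (by positivity)
      _ = B^((2/ε)*(ε/2)) := by rw [← Real.rpow_mul hBpos.le]
      _ = B := by
            rw [show (2/ε)*(ε/2) = 1 by field_simp, Real.rpow_one]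
    have hinvΛ : (1:ℝ) ≤ 1/Λ := by
      rw [le_div_iff₀ hΛ0]; linarith
    -- the branching number
    set K₀ : ℝ := C * (d'/(3*Λ))^t with hK₀
    have hKbig : (1/Λ)^u + 1 ≤ K₀ := by
      have h1 : (d'/(3*Λ))^t = (d'/3)^t * (1/Λ)^t := by
        rw [← Real.mul_rpow (by positivity) (by positivity)]
        congr 1
        field_simp
      have h2 : (1/Λ)^t = (1/Λ)^u * (1/Λ)^(t-u) := by
        rw [← Real.rpow_add (by positivity)]
        congr 1
        ring
      have h3 : (1/Λ)^(ε/2) ≤ (1/Λ)^(t-u) :=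
        Real.rpow_le_rpow_of_exponent_le hinvΛ (by linarith)
      have h4 : (1/Λ)^(ε/2) = (Λ^(ε/2))⁻¹ := by
        rw [one_div, ← Real.inv_rpow hΛ0.le]
      have hΛε : 0 < Λ^(ε/2) := Real.rpow_pos_of_pos hΛ0 _
      have h5 : B⁻¹ ≤ (Λ^(ε/2))⁻¹ := by
        apply inv_anti₀ hΛε hΛB
      have h6 : B⁻¹ ≤ (1/Λ)^(t-u) := by
        rw [← h4] at h5
        exact le_trans h5 h3
      have hud : (0:ℝ) < (1/Λ)^u := Real.rpow_pos_of_pos (by positivity) _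
      have h7 : (1:ℝ) ≤ (1/Λ)^u := Real.one_le_rpow hinvΛ hu0.le
      have h8 : C * (d'/3)^t * B⁻¹ = 2 := by
        rw [hB]
        have : (0:ℝ) < C * (d'/3)^t := by
          have := Real.rpow_pos_of_pos hd3 t
          positivity
        field_simp
      have hrt : (0:ℝ) < (d'/3)^t := Real.rpow_pos_of_pos hd3 t
      calc (1/Λ)^u + 1 ≤ 2 * (1/Λ)^u := by linarith
      _ = (C * (d'/3)^t * B⁻¹) * (1/Λ)^u := by rw [h8]
      _ ≤ (C * (d'/3)^t * (1/Λ)^(t-u)) * (1/Λ)^u := by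
            apply mul_le_mul_of_nonneg_right ?_ hud.le
            apply mul_le_mul_of_nonneg_left h6 (by positivity)
      _ = C * ((d'/3)^t * ((1/Λ)^u * (1/Λ)^(t-u))) := by ring
      _ = K₀ := by rw [hK₀, h1, h2]
    set k : ℕ := ⌊K₀⌋₊ with hkdef
    have hK₀pos : 0 < K₀ := by
      have h7 : (0:ℝ) < (1/Λ)^u := Real.rpow_pos_of_pos (by positivity) _
      linarith
    have hk1 : (1/Λ)^u ≤ (k:ℝ) := by
      have := Nat.sub_one_lt_floor K₀
      rw [hkdef]
      linarith
    have hk2 : 2 ≤ k := by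
      apply Nat.le_floor
      have h7 : (1:ℝ) ≤ (1/Λ)^u := Real.one_le_rpow hinvΛ hu0.le
      push_cast
      linarith
    have hk1' : 1 ≤ k := le_trans (by norm_num) hk2
    -- the step existence
    have hstep : ∀ x ∈ F, ∀ n : ℕ, ∃ y : Fin k → ℝ, (∀ i, y i ∈ F) ∧
        (∀ i, |y i - x| < Λ^n/4) ∧ (∀ i j, i ≠ j → 3*Λ^(n+1) ≤ |y i - y j|) := by
      intro x hx n
      have hpn : (0:ℝ) < Λ^n := pow_pos hΛ0 n
      have hpn1 : Λ^(n+1) ≤ Λ^n * (1/13) := by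
        rw [pow_succ]
        exact mul_le_mul_of_nonneg_left hΛ13 hpn.le
      have hΛn1 : Λ^(n+1) ≤ Λ := by
        calc Λ^(n+1) ≤ Λ^1 := pow_le_pow_of_le_one hΛ0.le hΛlt1.le (by omega)
        _ = Λ := pow_one Λ
      set R' : ℝ := min (Λ^n/4) (Metric.diam F/2) with hR'
      set ρ : ℝ := 3*Λ^(n+1) with hρ
      have hR'0 : 0 < R' := lt_min (by linarith) (by linarith)
      have hR'd : R' < Metric.diam F :=
        lt_of_le_of_lt (min_le_right _ _) (by linarith)
      have hρ0 : 0 < ρ := by rw [hρ]; positivity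
      have hρR' : ρ < R' := by
        apply lt_min
        · rw [hρ]; nlinarith
        · rw [hρ]
          calc 3*Λ^(n+1) ≤ 3*Λ := by linarith
          _ ≤ 3*(Metric.diam F/12) := by linarith
          _ < Metric.diam F/2 := by linarith
      have hcovlow := hcov x hx R' hR'0 hR'd ρ hρ0 hρR'
      have hEsub : Metric.ball x R' ∩ F ⊆ Icc 0 1 := fun z hz => hF hz.2
      obtain ⟨P, hPE, hPsep, hPge⟩ := exists_sep_net hEsub hρ0
      have hΛn1' : Λ^n ≤ 1 := pow_le_one₀ hΛ0.le hΛlt1.le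
      have hR'low : d' * Λ^n ≤ R' := by
        apply le_min
        · calc d' * Λ^n ≤ (1/4) * Λ^n := by
                apply mul_le_mul_of_nonneg_right hd'14 hpn.le
          _ = Λ^n/4 := by ring
        · calc d' * Λ^n ≤ d' * 1 := by
                apply mul_le_mul_of_nonneg_left hΛn1' hd'0.le
          _ = d' := by ring
          _ ≤ Metric.diam F/2 := min_le_right _ _
      have hratio : d'/(3*Λ) ≤ R'/ρ := by
        rw [div_le_div_iff₀ (by positivity) hρ0]
        rw [hρ]
        calc d' * (3*Λ^(n+1)) = (3*Λ) * (d' * Λ^n) := by ring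
        _ ≤ (3*Λ) * R' := by
              apply mul_le_mul_of_nonneg_left hR'low (by positivity)
        _ = R' * (3*Λ) := by ring
      have hKle : K₀ ≤ C * (R'/ρ)^t := by
        rw [hK₀]
        apply mul_le_mul_of_nonneg_left ?_ hC.le
        exact Real.rpow_le_rpow (by positivity) hratio ht0
      have hkcard : k ≤ P.card := by
        have hchain : (k:ℝ) ≤ (P.card : ℝ) := by
          have hfl : (k:ℝ) ≤ K₀ := by
            rw [hkdef]; exact Nat.floor_le hK₀pos.le
          have hcn : (coverNum (Metric.ball x R' ∩ F) ρ : ℝ) ≤ (P.card : ℝ) := by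
            exact_mod_cast hPge
          calc (k:ℝ) ≤ K₀ := hfl
          _ ≤ C * (R'/ρ)^t := hKle
          _ ≤ (coverNum (Metric.ball x R' ∩ F) ρ : ℝ) := hcovlow
          _ ≤ (P.card : ℝ) := hcn
        exact_mod_cast hchain
      obtain ⟨Q, hQsub, hQcard⟩ := Finset.exists_subset_card_eq hkcard
      set y : Fin k → ℝ := fun i => ((Q.orderIsoOfFin hQcard) i : ℝ) with hy
      have hyP : ∀ i, y i ∈ P := fun i => hQsub ((Q.orderIsoOfFin hQcard) i).2
      have hyE : ∀ i, y i ∈ Metric.ball x R' ∩ F := fun i => hPE (hyP i)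
      have hyinj : ∀ i j : Fin k, i ≠ j → y i ≠ y j := by
        intro i j hij he
        apply hij
        have := (Q.orderIsoOfFin hQcard).injective (Subtype.ext he)
        exact this
      refine ⟨y, fun i => (hyE i).2, ?_, ?_⟩
      · intro i
        have := (hyE i).1
        rw [mem_ball, Real.dist_eq] at this
        exact lt_of_lt_of_le this (min_le_left _ _)
      · intro i j hij
        have := hPsep (y i) (hyP i) (y j) (hyP j) (hyinj i j hij)
        rw [hρ] at this
        exact this
    -- run the construction
    obtain ⟨a, hnil, hnest, hsep, hsub01, hpoints⟩ :=
      moran_construction k Λ hΛ0 hΛ13 F hF x₀ hx₀ hstep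
    set F' : Set ℝ := ⋂ n : ℕ, ⋃ w : {w : List (Fin k) // w.length = n},
        Set.Icc (a w.1) (a w.1 + Λ^n) with hF'
    have hF'sub01 : F' ⊆ Icc 0 1 := by
      intro z hz
      obtain ⟨w, hw⟩ := Set.mem_iUnion.1 (Set.mem_iInter.1 hz 0)
      have := hsub01 w.1
      rw [w.2] at this
      exact this hw
    -- F' ⊆ F
    have hF'F : F' ⊆ F := by
      intro z hz
      have hcl : z ∈ closure F := by
        rw [Metric.mem_closure_iff]
        intro ε' hε'
        obtain ⟨m, hm⟩ := exists_pow_lt_of_lt_one hε' hΛlt1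
        obtain ⟨wm, hwm⟩ := Set.mem_iUnion.1 (Set.mem_iInter.1 hz m)
        obtain ⟨p, hpF, hpI⟩ := hpoints wm.1
        rw [wm.2] at hpI
        refine ⟨p, hpF, ?_⟩
        rw [Real.dist_eq]
        have hpm : (0:ℝ) < Λ^m := pow_pos hΛ0 m
        have h1 := hwm.1; have h2 := hwm.2
        have h3 := hpI.1; have h4 := hpI.2
        rw [abs_lt]
        constructor <;> linarith
      rwa [hFc.isClosed.closure_eq] at hcl
    -- compactness
    have hclosed : IsClosed F' := by
      apply isClosed_iInter
      intro n
      have : Finite {w : List (Fin k) // w.length = n} := finite_words k n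
      exact isClosed_iUnion_of_finite (fun w => isClosed_Icc)
    have hcpt : IsCompact F' :=
      IsCompact.of_isClosed_subset isCompact_Icc hclosed hF'sub01
    -- diameter positive
    have hdiamF' : 0 < Metric.diam F' := by
      set c0 : Fin k := ⟨0, by omega⟩ with hc0
      set c1 : Fin k := ⟨1, by omega⟩ with hc1
      obtain ⟨z0, hz0F, hz0I⟩ := moran_meets hk1' hΛ0 hnest [c0]
      obtain ⟨z1, hz1F, hz1I⟩ := moran_meets hk1' hΛ0 hnest [c1]
      have hcc : c0 ≠ c1 := by
        intro h
        have := congrArg Fin.val h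
        simp [hc0, hc1] at this
      have hne : ([c0] : List (Fin k)) ≠ [c1] := fun h => hcc (by injection h)
      have hsepz := moran_sep_points hΛ0 hΛlt1.le hnest hsep [c0] [c1] [] rfl hne z0 z1
        (by simpa using hz0I) (by simpa using hz1I)
      have hΛle : Λ ≤ |z0 - z1| := by simpa using hsepz
      have hbdd : Bornology.IsBounded F' := (isBounded_Icc (0:ℝ) 1).subset hF'sub01
      have := Metric.dist_le_diam_of_mem hbdd hz0F hz1F
      rw [Real.dist_eq] at this
      linarith
    -- the dimension bound
    have hmem := moran_mem_LS hk1' hΛ0 hΛ13 hnest hsep hsub01 u hu0.le hk1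
    have hbddLS : BddAbove (LS F') := bddAbove_LS hF'sub01 hdiamF'
    have hfinal : u ≤ lowerDim F' := by
      rw [lowerDim_eq_sSup]
      exact le_csSup hbddLS hmem
    refine ⟨F', hF'F, hcpt, ⟨k, hk1', fun n => Λ^n, a, pow_zero Λ, hnil,
      fun n => pow_pos hΛ0 (n+1), hnest, hsep, rfl⟩, hfinal⟩
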